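/- Let A be a positive definite real symmetric n×n matrix with smallest eigenvalue λ₁ > 0, M a metric space, and h : ℝⁿ × M → ℝⁿ continuous and componentwise in x satisfying (A4): (hₖ(z₁,v)-hₖ(z₂,v))(z₁-z₂) ≤ b|z₁-z₂|² for some b > 0, and h(0,u) ≠ 0 for all u ∈ M. Then for every u ∈ M and every λ ∈ (0, λ₁/b), the system A x = λ h(x,u) has a unique solution, and it is nontrivial. -/

import Mathlib

open scoped InnerProductSpace

lemma stmt7aux_quad_bound {n : ℕ} [Nonempty (Fin n)] (A : Matrix (Fin n) (Fin n) ℝ)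
    (hA : A.IsHermitian) (x : EuclideanSpace ℝ (Fin n)) :
    (⨅ i, hA.eigenvalues i) * ‖x‖ ^ 2 ≤ ⟪x, Matrix.toEuclideanCLM (𝕜 := ℝ) A x⟫_ℝ := by
  set l := ⨅ i, hA.eigenvalues i with hl
  have hTs : (Matrix.toEuclideanLin A).IsSymmetric :=
    Matrix.isHermitian_iff_isSymmetric.1 hA
  have hrank : Module.finrank ℝ (EuclideanSpace ℝ (Fin n)) = Fintype.card (Fin n) :=
    finrank_euclideanSpace
  set B := hTs.eigenvectorBasis hrank with hB
  set eig := hTs.eigenvalues hrank with heig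
  have hT : Matrix.toEuclideanCLM (𝕜 := ℝ) A x = Matrix.toEuclideanLin A x := by
    rw [← Matrix.coe_toEuclideanCLM_eq_toEuclideanLin]; rfl
  have hle : ∀ i, l ≤ eig i := by
    intro i
    have h1 : l ≤ hA.eigenvalues ((Fintype.equivOfCardEq (Fintype.card_fin _)) i) :=
      ciInf_le (Finite.bddBelow_range _) _
    simpa [Matrix.IsHermitian.eigenvalues, Matrix.IsHermitian.eigenvalues₀, heig] using h1
  have hrep : ∀ i, B.repr (Matrix.toEuclideanLin A x) i = eig i * B.repr x i :=
    fun i => hTs.eigenvectorBasis_apply_self_apply hrank x i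
  have hinner : ⟪x, Matrix.toEuclideanLin A x⟫_ℝ
      = ∑ i, eig i * (B.repr x i) ^ 2 := by
    rw [← B.repr.inner_map_map x (Matrix.toEuclideanLin A x)]
    simp only [PiLp.inner_apply, RCLike.inner_apply, conj_trivial, hrep]
    congr 1; ext i; ring
  have hnorm : ‖x‖ ^ 2 = ∑ i, (B.repr x i) ^ 2 := by
    rw [← B.repr.norm_map x, ← real_inner_self_eq_norm_sq]
    simp only [PiLp.inner_apply, RCLike.inner_apply, conj_trivial]
    congr 1; ext i; ring
  rw [hT, hinner, hnorm, Finset.mul_sum]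
  exact Finset.sum_le_sum fun i _ => mul_le_mul_of_nonneg_right (hle i) (sq_nonneg _)

lemma stmt7aux_int_bound (g : ℝ → ℝ) (hg : Continuous g) (b : ℝ)
    (hpt : ∀ t : ℝ, (g t - g 0) * t ≤ b * t ^ 2) (z : ℝ) :
    ∫ t in (0:ℝ)..z, g t ≤ g 0 * z + b * z ^ 2 / 2 := by
  have hcl : Continuous fun t : ℝ => g 0 + b * t := by fun_prop
  have key1 : ∀ t : ℝ, 0 ≤ t → g t ≤ g 0 + b * t := by
    intro t ht
    rcases eq_or_lt_of_le ht with h0 | h0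
    · simp [← h0]
    · nlinarith [hpt t]
  have key2 : ∀ t : ℝ, t ≤ 0 → g 0 + b * t ≤ g t := by
    intro t ht
    rcases eq_or_lt_of_le ht with h0 | h0
    · simp [h0]
    · nlinarith [hpt t]
  have hlin : ∀ a c : ℝ, ∫ t in a..c, (g 0 + b * t)
      = g 0 * (c - a) + b * (c ^ 2 - a ^ 2) / 2 := by
    intro a c
    rw [intervalIntegral.integral_add (intervalIntegrable_const)
      ((by fun_prop : Continuous fun t : ℝ => b * t).intervalIntegrable _ _),
      intervalIntegral.integral_const, intervalIntegral.integral_const_mul]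
    simp only [integral_id, smul_eq_mul]
    ring
  rcases le_or_gt 0 z with hz | hz
  · have h1 := intervalIntegral.integral_mono_on (μ := MeasureTheory.volume)
      (f := g) (g := fun t => g 0 + b * t) hz
      (hg.intervalIntegrable _ _) (hcl.intervalIntegrable _ _)
      (fun t ht => key1 t ht.1)
    have := hlin 0 z
    nlinarith [h1]
  · have h1 : ∫ t in z..(0:ℝ), (g 0 + b * t) ≤ ∫ t in z..(0:ℝ), g t :=
      intervalIntegral.integral_mono_on hz.le
        (hcl.intervalIntegrable _ _) (hg.intervalIntegrable _ _)
        (fun t ht => key2 t ht.2)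
    have h2 : ∫ t in (0:ℝ)..z, g t = -∫ t in z..(0:ℝ), g t :=
      (intervalIntegral.integral_symm _ _)
    have := hlin z 0
    nlinarith [h1]

lemma stmt7aux_norm_sq {n : ℕ} (v : EuclideanSpace ℝ (Fin n)) :
    ‖v‖ ^ 2 = ∑ k, v k ^ 2 := by
  rw [← real_inner_self_eq_norm_sq]
  simp only [PiLp.inner_apply, RCLike.inner_apply, conj_trivial]
  exact Finset.sum_congr rfl fun k _ => (pow_two _).symm

lemma stmt7aux_deriv_quad {n : ℕ}
    (T : EuclideanSpace ℝ (Fin n) →L[ℝ] EuclideanSpace ℝ (Fin n))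
    (hsym : ∀ v w, ⟪T v, w⟫_ℝ = ⟪v, T w⟫_ℝ) (x : EuclideanSpace ℝ (Fin n)) :
    HasFDerivAt (fun y => (1/2) * ⟪y, T y⟫_ℝ) ((innerSL ℝ (T x)) : _ →L[ℝ] ℝ) x := by
  have hb := (isBoundedBilinearMap_inner (𝕜 := ℝ)
      (E := EuclideanSpace ℝ (Fin n))).hasFDerivAt (x, T x)
  have hL : HasFDerivAt (fun y : EuclideanSpace ℝ (Fin n) => (y, T y))
      ((ContinuousLinearMap.id ℝ _).prod T) x :=
    ((ContinuousLinearMap.id ℝ _).prod T).hasFDerivAt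
  have h1 := (hb.comp x hL).const_mul (1/2)
  refine h1.congr_fderiv ?_
  ext y
  simp only [ContinuousLinearMap.smul_apply, ContinuousLinearMap.comp_apply,
    ContinuousLinearMap.prod_apply, ContinuousLinearMap.coe_id', id_eq,
    IsBoundedBilinearMap.deriv_apply, innerSL_apply_apply, smul_eq_mul]
  rw [← hsym x y, real_inner_comm y (T x)]
  ring

lemma stmt7aux_deriv_sum {n : ℕ} (g : Fin n → ℝ → ℝ) (d : EuclideanSpace ℝ (Fin n))
    (x : EuclideanSpace ℝ (Fin n)) (hg : ∀ k, HasDerivAt (g k) (d k) (x k)) :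
    HasFDerivAt (fun y : EuclideanSpace ℝ (Fin n) => ∑ k, g k (y k))
      ((innerSL ℝ d) : _ →L[ℝ] ℝ) x := by
  have h1 : ∀ k : Fin n, HasFDerivAt (fun y : EuclideanSpace ℝ (Fin n) => g k (y k))
      (d k • (EuclideanSpace.proj k : EuclideanSpace ℝ (Fin n) →L[ℝ] ℝ)) x :=
    fun k => by
      have hp : HasFDerivAt (fun y : EuclideanSpace ℝ (Fin n) => y k)
          (EuclideanSpace.proj k : EuclideanSpace ℝ (Fin n) →L[ℝ] ℝ) x := by
        simpa using (EuclideanSpace.proj (𝕜 := ℝ) k).hasFDerivAt (x := x)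
      exact (hg k).comp_hasFDerivAt x hp
  have h2 := HasFDerivAt.fun_sum (fun k (_ : k ∈ Finset.univ) => h1 k)
  refine h2.congr_fderiv ?_
  ext y
  simp [PiLp.inner_apply]
  exact Finset.sum_congr rfl fun k _ => mul_comm _ _

theorem stmt7 (n : ℕ) (hn : 0 < n) (M : Type*) [MetricSpace M]
    (A : Matrix (Fin n) (Fin n) ℝ) (hApd : A.PosDef)
    (l1 : ℝ) (hl1 : l1 = ⨅ i, hApd.1.eigenvalues i) (hl1pos : 0 < l1)
    (hs : Fin n → ℝ → M → ℝ)
    (hcont : ∀ k, Continuous fun p : ℝ × M => hs k p.1 p.2)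
    (h : EuclideanSpace ℝ (Fin n) → M → EuclideanSpace ℝ (Fin n))
    (hdef : ∀ x u k, h x u k = hs k (x k) u)
    (b : ℝ) (hb : 0 < b)
    (hA4 : ∀ (k : Fin n) (z₁ z₂ : ℝ) (v : M),
      (hs k z₁ v - hs k z₂ v) * (z₁ - z₂) ≤ b * |z₁ - z₂| ^ 2)
    (h0 : ∀ u : M, h 0 u ≠ 0)
    (u : M) (lam : ℝ) (hlam0 : 0 < lam) (hlam : lam < l1 / b) :
    (∃! x : EuclideanSpace ℝ (Fin n),
        Matrix.toEuclideanCLM (𝕜 := ℝ) A x = lam • h x u)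
    ∧ ∀ x : EuclideanSpace ℝ (Fin n),
        Matrix.toEuclideanCLM (𝕜 := ℝ) A x = lam • h x u → x ≠ 0 := by
  have : Nonempty (Fin n) := ⟨⟨0, hn⟩⟩
  set T := Matrix.toEuclideanCLM (𝕜 := ℝ) A with hT
  have hlb : lam * b < l1 := by
    rw [lt_div_iff₀ hb] at hlam; linarith
  have hsym : ∀ v w : EuclideanSpace ℝ (Fin n), ⟪T v, w⟫_ℝ = ⟪v, T w⟫_ℝ := by
    have hS := Matrix.isHermitian_iff_isSymmetric.1 hApd.1
    intro v w
    have hv : T v = Matrix.toEuclideanLin A v := by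
      rw [hT, ← Matrix.coe_toEuclideanCLM_eq_toEuclideanLin]; rfl
    have hw : T w = Matrix.toEuclideanLin A w := by
      rw [hT, ← Matrix.coe_toEuclideanCLM_eq_toEuclideanLin]; rfl
    rw [hv, hw]; exact hS v w
  have hquad : ∀ x : EuclideanSpace ℝ (Fin n), l1 * ‖x‖ ^ 2 ≤ ⟪x, T x⟫_ℝ := by
    intro x; rw [hl1]; exact stmt7aux_quad_bound A hApd.1 x
  have hmono : ∀ x y : EuclideanSpace ℝ (Fin n),
      ⟪x - y, h x u - h y u⟫_ℝ ≤ b * ‖x - y‖ ^ 2 := by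
    intro x y
    rw [stmt7aux_norm_sq, Finset.mul_sum]
    simp only [PiLp.inner_apply, RCLike.inner_apply, conj_trivial]
    apply Finset.sum_le_sum
    intro k _
    have h1 := hA4 k (x k) (y k) u
    rw [sq_abs] at h1
    simp only [PiLp.sub_apply, hdef]
    nlinarith [h1]
  have huniq : ∀ x y : EuclideanSpace ℝ (Fin n),
      T x = lam • h x u → T y = lam • h y u → x = y := by
    intro x y hx hy
    have h1 : l1 * ‖x - y‖ ^ 2 ≤ ⟪x - y, T (x - y)⟫_ℝ := hquad _
    have h2 : T (x - y) = lam • (h x u - h y u) := by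
      rw [map_sub, hx, hy, smul_sub]
    have h3 : ⟪x - y, T (x - y)⟫_ℝ = lam * ⟪x - y, h x u - h y u⟫_ℝ := by
      rw [h2, real_inner_smul_right]
    have h4 : lam * ⟪x - y, h x u - h y u⟫_ℝ ≤ lam * (b * ‖x - y‖ ^ 2) :=
      mul_le_mul_of_nonneg_left (hmono x y) hlam0.le
    have h5 : ‖x - y‖ ^ 2 = 0 := by nlinarith [sq_nonneg ‖x - y‖]
    have h6 := (pow_eq_zero_iff (two_ne_zero)).mp h5
    rwa [norm_sub_eq_zero_iff] at h6
  have hnontriv : ∀ x : EuclideanSpace ℝ (Fin n), T x = lam • h x u → x ≠ 0 := by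
    intro x hx hx0
    subst hx0
    rw [map_zero] at hx
    apply h0 u
    have h6 := hx.symm
    rwa [smul_eq_zero_iff_right (ne_of_gt hlam0)] at h6
  refine ⟨?_, hnontriv⟩
  have hcu : ∀ k, Continuous fun z => hs k z u :=
    fun k => (hcont k).comp (continuous_id.prodMk continuous_const)
  set H : Fin n → ℝ → ℝ := fun k z => ∫ t in (0:ℝ)..z, hs k t u with hH
  set F : EuclideanSpace ℝ (Fin n) → ℝ :=
    fun x => (1/2) * ⟪x, T x⟫_ℝ - lam * ∑ k, H k (x k) with hF
  have hderiv : ∀ x : EuclideanSpace ℝ (Fin n),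
      HasFDerivAt F ((innerSL ℝ (T x - lam • h x u)) : _ →L[ℝ] ℝ) x := by
    intro x
    have h1 := stmt7aux_deriv_quad T hsym x
    have h2 : HasFDerivAt (fun y : EuclideanSpace ℝ (Fin n) => ∑ k, H k (y k))
        ((innerSL ℝ (h x u)) : _ →L[ℝ] ℝ) x := by
      apply stmt7aux_deriv_sum
      intro k
      have h3 := ((hcu k).integral_hasStrictDerivAt 0 (x k)).hasDerivAt
      rw [hdef]
      exact h3
    have h3 := h1.sub (h2.const_mul lam)
    refine h3.congr_fderiv ?_
    ext y
    simp only [innerSL_apply_apply, ContinuousLinearMap.sub_apply, ContinuousLinearMap.smul_apply,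
      smul_eq_mul]
    rw [inner_sub_left, real_inner_smul_left]
  have hFc : Continuous F :=
    continuous_iff_continuousAt.2 fun x => (hderiv x).continuousAt
  have hcoer : ∀ x : EuclideanSpace ℝ (Fin n),
      (l1 - lam * b) / 2 * ‖x‖ ^ 2 - (lam * ‖h 0 u‖) * ‖x‖ ≤ F x := by
    intro x
    have hHb : ∀ k, H k (x k) ≤ hs k 0 u * x k + b * (x k) ^ 2 / 2 := by
      intro k
      apply stmt7aux_int_bound _ (hcu k)
      intro t
      have h1 := hA4 k t 0 u
      simpa [sq_abs] using h1
    have h2 : ⟪h 0 u, x⟫_ℝ = ∑ k, hs k 0 u * x k := by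
      rw [PiLp.inner_apply]
      simp only [RCLike.inner_apply, conj_trivial]
      refine Finset.sum_congr rfl fun k _ => ?_
      rw [hdef]
      norm_num
      ring
    have hsum : ∑ k, H k (x k) ≤ ‖h 0 u‖ * ‖x‖ + b / 2 * ‖x‖ ^ 2 := by
      have h1 : ∑ k, H k (x k) ≤ ∑ k, (hs k 0 u * x k + b * (x k) ^ 2 / 2) :=
        Finset.sum_le_sum fun k _ => hHb k
      have h3 : ∑ k, (hs k 0 u * x k + b * (x k) ^ 2 / 2)
          = (∑ k, hs k 0 u * x k) + b / 2 * ∑ k, (x k) ^ 2 := by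
        rw [Finset.sum_add_distrib, Finset.mul_sum]
        congr 1
        exact Finset.sum_congr rfl fun k _ => by ring
      have hip : ⟪h 0 u, x⟫_ℝ ≤ ‖h 0 u‖ * ‖x‖ := real_inner_le_norm _ _
      rw [h3, ← h2, ← stmt7aux_norm_sq] at h1
      linarith
    have hq := hquad x
    have hmul : lam * ∑ k, H k (x k) ≤ lam * (‖h 0 u‖ * ‖x‖ + b / 2 * ‖x‖ ^ 2) :=
      mul_le_mul_of_nonneg_left hsum hlam0.le
    show (l1 - lam * b) / 2 * ‖x‖ ^ 2 - (lam * ‖h 0 u‖) * ‖x‖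
        ≤ (1/2) * ⟪x, T x⟫_ℝ - lam * ∑ k, H k (x k)
    nlinarith [hq, hmul]
  have htend : Filter.Tendsto F (Filter.cocompact (EuclideanSpace ℝ (Fin n)))
      Filter.atTop := by
    have hcpos : 0 < (l1 - lam * b) / 2 := div_pos (by linarith) two_pos
    have hphi : Filter.Tendsto
        (fun r : ℝ => (l1 - lam * b) / 2 * r ^ 2 - (lam * ‖h 0 u‖) * r)
        Filter.atTop Filter.atTop := by
      have heq : (fun r : ℝ => (l1 - lam * b) / 2 * r ^ 2 - (lam * ‖h 0 u‖) * r)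
          = fun r : ℝ => ((l1 - lam * b) / 2 * r - lam * ‖h 0 u‖) * r := by
        funext r; ring
      rw [heq]
      apply Filter.Tendsto.atTop_mul_atTop₀ _ Filter.tendsto_id
      apply Filter.tendsto_atTop_add_const_right
      exact Filter.Tendsto.const_mul_atTop hcpos Filter.tendsto_id
    exact Filter.tendsto_atTop_mono hcoer (hphi.comp tendsto_norm_cocompact_atTop)
  obtain ⟨x₀, hx₀⟩ := hFc.exists_forall_le htend
  have hmin : IsLocalMin F x₀ := Filter.Eventually.of_forall hx₀
  have hzero := hmin.hasFDerivAt_eq_zero (hderiv x₀)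
  have hw : T x₀ - lam • h x₀ u = 0 := by
    have h6 := DFunLike.congr_fun hzero (T x₀ - lam • h x₀ u)
    simp only [innerSL_apply_apply, ContinuousLinearMap.zero_apply] at h6
    exact inner_self_eq_zero.mp h6
  exact ⟨x₀, sub_eq_zero.mp hw, fun y hy => huniq y x₀ hy (sub_eq_zero.mp hw)⟩
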